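/- Let f(x) = a₄x⁴ + a₃x³ + a₂x² + a₁x + a₀ and let (x₁,y₁), (x₂,y₂) be points with y₁² = f(x₁), y₂² = f(x₂), x₁ ≠ x₂. Define C = ((y₁−y₂)/(x₁−x₂))² − a₄(x₁+x₂)² − a₃(x₁+x₂). Then along any smooth motion t ↦ (x₁(t), y₁(t)), (x₂(t), y₂(t)) on the curve satisfying the differential relation x₁'/y₁ + x₂'/y₂ = 0 (with y₁, y₂ ≠ 0), the quantity C is constant, i.e. dC/dt = 0. -/

import Mathlib

/-- Euler's algebraic integral `C` is constant along any smooth motion of two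
points on the quartic curve `y² = f(x)` satisfying `x₁'/y₁ + x₂'/y₂ = 0`. -/
theorem stmt_0 (a₀ a₁ a₂ a₃ a₄ : ℝ)
    (x₁ x₂ y₁ y₂ : ℝ → ℝ)
    (hx₁ : Differentiable ℝ x₁) (hx₂ : Differentiable ℝ x₂)
    (hy₁ : Differentiable ℝ y₁) (hy₂ : Differentiable ℝ y₂)
    (hc₁ : ∀ t, (y₁ t) ^ 2 =
      a₄ * (x₁ t) ^ 4 + a₃ * (x₁ t) ^ 3 + a₂ * (x₁ t) ^ 2 + a₁ * x₁ t + a₀)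
    (hc₂ : ∀ t, (y₂ t) ^ 2 =
      a₄ * (x₂ t) ^ 4 + a₃ * (x₂ t) ^ 3 + a₂ * (x₂ t) ^ 2 + a₁ * x₂ t + a₀)
    (hy₁0 : ∀ t, y₁ t ≠ 0) (hy₂0 : ∀ t, y₂ t ≠ 0)
    (hne : ∀ t, x₁ t ≠ x₂ t)
    (hrel : ∀ t, deriv x₁ t / y₁ t + deriv x₂ t / y₂ t = 0) :
    ∀ t, deriv (fun t =>
      ((y₁ t - y₂ t) / (x₁ t - x₂ t)) ^ 2
        - a₄ * (x₁ t + x₂ t) ^ 2 - a₃ * (x₁ t + x₂ t)) t = 0 := by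
  intro t
  obtain ⟨u, hu⟩ : ∃ u, x₁ t = u := ⟨_, rfl⟩
  obtain ⟨v, hv⟩ : ∃ v, x₂ t = v := ⟨_, rfl⟩
  obtain ⟨p, hp⟩ : ∃ p, y₁ t = p := ⟨_, rfl⟩
  obtain ⟨q, hq⟩ : ∃ q, y₂ t = q := ⟨_, rfl⟩
  obtain ⟨u', hu'⟩ : ∃ u', deriv x₁ t = u' := ⟨_, rfl⟩
  obtain ⟨v', hv'⟩ : ∃ v', deriv x₂ t = v' := ⟨_, rfl⟩
  obtain ⟨p', hp'⟩ : ∃ p', deriv y₁ t = p' := ⟨_, rfl⟩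
  obtain ⟨q', hq'⟩ : ∃ q', deriv y₂ t = q' := ⟨_, rfl⟩
  have hX₁ : HasDerivAt x₁ u' t := hu' ▸ (hx₁ t).hasDerivAt
  have hX₂ : HasDerivAt x₂ v' t := hv' ▸ (hx₂ t).hasDerivAt
  have hY₁ : HasDerivAt y₁ p' t := hp' ▸ (hy₁ t).hasDerivAt
  have hY₂ : HasDerivAt y₂ q' t := hq' ▸ (hy₂ t).hasDerivAt
  have hp0 : p ≠ 0 := hp ▸ hy₁0 t
  have hq0 : q ≠ 0 := hq ▸ hy₂0 t
  have hden : u - v ≠ 0 := by rw [← hu, ← hv]; exact sub_ne_zero.mpr (hne t)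
  have hF₁ := (((((hX₁.pow 4).const_mul a₄).add ((hX₁.pow 3).const_mul a₃)).add
      ((hX₁.pow 2).const_mul a₂)).add (hX₁.const_mul a₁)).add_const a₀
  have hF₂ := (((((hX₂.pow 4).const_mul a₄).add ((hX₂.pow 3).const_mul a₃)).add
      ((hX₂.pow 2).const_mul a₂)).add (hX₂.const_mul a₁)).add_const a₀
  have hG₁ : HasDerivAt (fun t => (y₁ t) ^ 2) (2 * p ^ 1 * p') t := hp ▸ (hY₁.pow 2)
  have hG₂ : HasDerivAt (fun t => (y₂ t) ^ 2) (2 * q ^ 1 * q') t := hq ▸ (hY₂.pow 2)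
  rw [funext hc₁] at hG₁
  rw [funext hc₂] at hG₂
  have A := hG₁.unique hF₁
  have B := hG₂.unique hF₂
  rw [hu] at A
  rw [hv] at B
  norm_num at A B
  have R : u' * q + v' * p = 0 := by
    have h := hrel t
    rw [hu', hv', hp, hq] at h
    field_simp at h
    linarith
  have h1 : p ^ 2 = a₄ * u ^ 4 + a₃ * u ^ 3 + a₂ * u ^ 2 + a₁ * u + a₀ := by
    rw [← hu, ← hp]; exact hc₁ t
  have h2 : q ^ 2 = a₄ * v ^ 4 + a₃ * v ^ 3 + a₂ * v ^ 2 + a₁ * v + a₀ := by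
    rw [← hv, ← hq]; exact hc₂ t
  have hC : HasDerivAt (fun t =>
      ((y₁ t - y₂ t) / (x₁ t - x₂ t)) ^ 2
        - a₄ * (x₁ t + x₂ t) ^ 2 - a₃ * (x₁ t + x₂ t))
      (2 * ((p - q)/(u - v)) ^ 1 * (((p' - q') * (u - v) - (p - q) * (u' - v'))/(u - v) ^ 2)
        - a₄ * (2 * (u + v) ^ 1 * (u' + v')) - a₃ * (u' + v')) t := by
    have := ((((hY₁.sub hY₂).div (hX₁.sub hX₂) (by rwa [Pi.sub_apply, hu, hv])).pow 2).sub
      (((hX₁.add hX₂).pow 2).const_mul a₄)).sub ((hX₁.add hX₂).const_mul a₃)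
    simp only [Pi.sub_apply, Pi.add_apply, Pi.div_apply, Pi.pow_apply, hu, hv, hp, hq] at this
    exact this.congr_deriv (by norm_num)
  rw [hC.deriv]
  have hv'e : v' = -(u' * q) / p := by
    field_simp
    linear_combination R
  have hp'e : p' = (4*a₄*u^3 + 3*a₃*u^2 + 2*a₂*u + a₁) * u' / (2*p) := by
    field_simp
    linear_combination A
  have hq'1 : q' = (4*a₄*v^3 + 3*a₃*v^2 + 2*a₂*v + a₁) * v' / (2*q) := by
    field_simp
    linear_combination B
  have hq'e : q' = -((4*a₄*v^3 + 3*a₃*v^2 + 2*a₂*v + a₁) * u') / (2*p) := by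
    rw [hq'1, hv'e]
    field_simp
  rw [hv'e, hp'e, hq'e]
  field_simp
  linear_combination (-2*u'*(p-q))*h1 + (2*u'*(p-q))*h2
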